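/- For any simple graph G and any edge e of G, the energy of G is at most the energy of the graph obtained from G by deleting e, plus 2; that is, E(G) ≤ E(G − e) + 2. -/

import Mathlib

open Matrix Finset

section Aux
variable {n : Type*} [Fintype n] [DecidableEq n]

noncomputable def sgn1 (t : ℝ) : ℝ := if t < 0 then -1 else 1

lemma abs_sgn1_le (t : ℝ) : |sgn1 t| ≤ 1 := by
  unfold sgn1; split_ifs <;> simp

lemma sgn1_mul_self (t : ℝ) : sgn1 t * t = |t| := by
  unfold sgn1; split_ifs with h
  · rw [abs_of_neg h]; ring
  · rw [abs_of_nonneg (not_lt.mp h)]; ring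

/-- Cauchy–Schwarz style bound. -/
lemma cs_aux (x y s : n → ℝ) (hs : ∀ i, |s i| ≤ 1)
    (hx : ∑ i, x i ^ 2 ≤ 1) (hy : ∑ i, y i ^ 2 ≤ 1) :
    |∑ i, x i * s i * y i| ≤ 1 := by
  have h1 : |∑ i, x i * s i * y i| ≤ ∑ i, |x i| * |y i| := by
    refine (Finset.abs_sum_le_sum_abs _ _).trans (Finset.sum_le_sum fun i _ => ?_)
    rw [abs_mul, abs_mul]
    have h0 := abs_nonneg (x i)
    have h0' := abs_nonneg (y i)
    calc |x i| * |s i| * |y i| ≤ |x i| * 1 * |y i| :=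
          mul_le_mul_of_nonneg_right (mul_le_mul_of_nonneg_left (hs i) h0) h0'
      _ = |x i| * |y i| := by ring
  refine h1.trans ?_
  have h2 : (∑ i, |x i| * |y i|) ^ 2 ≤ (∑ i, |x i| ^ 2) * ∑ i, |y i| ^ 2 :=
    Finset.sum_mul_sq_le_sq_mul_sq _ _ _
  simp only [sq_abs] at h2
  have h3 : (0:ℝ) ≤ ∑ i, |x i| * |y i| :=
    Finset.sum_nonneg fun i _ => mul_nonneg (abs_nonneg _) (abs_nonneg _)
  have hx0 : (0:ℝ) ≤ ∑ i, x i ^ 2 := Finset.sum_nonneg fun i _ => sq_nonneg _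
  have hy0 : (0:ℝ) ≤ ∑ i, y i ^ 2 := Finset.sum_nonneg fun i _ => sq_nonneg _
  nlinarith

/-- The "sign" matrix of a Hermitian real matrix. -/
noncomputable def signMatrix {A : Matrix n n ℝ} (hA : A.IsHermitian) : Matrix n n ℝ :=
  (hA.eigenvectorUnitary : Matrix n n ℝ) *
    diagonal (fun i => sgn1 (hA.eigenvalues i)) *
    star (hA.eigenvectorUnitary : Matrix n n ℝ)

lemma signMatrix_trace_mul {A : Matrix n n ℝ} (hA : A.IsHermitian) :
    trace (signMatrix hA * A) = ∑ i, |hA.eigenvalues i| := by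
  set U : Matrix n n ℝ := (hA.eigenvectorUnitary : Matrix n n ℝ) with hU
  set s : n → ℝ := fun i => sgn1 (hA.eigenvalues i) with hsdef
  have hP : signMatrix hA = U * diagonal s * star U := rfl
  have hsU : star U * U = 1 := Unitary.coe_star_mul_self hA.eigenvectorUnitary
  calc trace (signMatrix hA * A)
      = trace (U * diagonal s * star U *
          (U * diagonal (RCLike.ofReal ∘ hA.eigenvalues) * star U)) := by
        rw [hP, ← (show A = U * diagonal (RCLike.ofReal ∘ hA.eigenvalues) * star U from hA.spectral_theorem)]
    _ = trace (U * (diagonal s * diagonal (RCLike.ofReal ∘ hA.eigenvalues)) * star U) := by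
        rw [show U * diagonal s * star U * (U * diagonal (RCLike.ofReal ∘ hA.eigenvalues) * star U)
            = U * (diagonal s * (star U * U) * diagonal (RCLike.ofReal ∘ hA.eigenvalues)) * star U
          from by noncomm_ring, hsU, mul_one]
    _ = trace (star U * U * (diagonal s * diagonal (RCLike.ofReal ∘ hA.eigenvalues))) := by
        rw [Matrix.trace_mul_cycle, Matrix.mul_assoc]
    _ = ∑ i, s i * hA.eigenvalues i := by
        rw [hsU, Matrix.one_mul, Matrix.diagonal_mul_diagonal, Matrix.trace_diagonal]
        rfl
    _ = ∑ i, |hA.eigenvalues i| := by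
        refine Finset.sum_congr rfl fun i _ => ?_
        simp only [hsdef]
        exact sgn1_mul_self _

lemma signMatrix_entry_bound {A : Matrix n n ℝ} (hA : A.IsHermitian) (i j : n) :
    |signMatrix hA i j| ≤ 1 := by
  set U : Matrix n n ℝ := (hA.eigenvectorUnitary : Matrix n n ℝ) with hU
  have hUs : U * star U = 1 := Unitary.coe_mul_star_self hA.eigenvectorUnitary
  have hrow : ∀ a : n, ∑ k, U a k ^ 2 = 1 := by
    intro a
    have := congrArg (fun M => M a a) hUs
    simpa [Matrix.mul_apply, Matrix.one_apply, sq, Matrix.star_apply] using this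
  have hentry : signMatrix hA i j
      = ∑ k, U i k * sgn1 (hA.eigenvalues k) * U j k := by
    show ((U * diagonal (fun k => sgn1 (hA.eigenvalues k))) * star U) i j = _
    rw [Matrix.mul_apply]
    simp only [Matrix.mul_diagonal, Matrix.star_apply, star_trivial]
  rw [hentry]
  exact cs_aux _ _ _ (fun k => abs_sgn1_le _) (le_of_eq (hrow i)) (le_of_eq (hrow j))

lemma trace_signMatrix_mul_le {A B : Matrix n n ℝ} (hA : A.IsHermitian) (hB : B.IsHermitian) :
    trace (signMatrix hA * B) ≤ ∑ j, |hB.eigenvalues j| := by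
  set U : Matrix n n ℝ := (hA.eigenvectorUnitary : Matrix n n ℝ) with hU
  set W : Matrix n n ℝ := (hB.eigenvectorUnitary : Matrix n n ℝ) with hW
  set s : n → ℝ := fun i => sgn1 (hA.eigenvalues i) with hsdef
  set M : Matrix n n ℝ := star U * W with hM
  have hP : signMatrix hA = U * diagonal s * star U := rfl
  have hsU : star U * U = 1 := Unitary.coe_star_mul_self hA.eigenvectorUnitary
  have hUs : U * star U = 1 := Unitary.coe_mul_star_self hA.eigenvectorUnitary
  have hsW : star W * W = 1 := Unitary.coe_star_mul_self hB.eigenvectorUnitary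
  have hstarM : star M = star W * U := by
    rw [hM, StarMul.star_mul, star_star]
  have hMM : star M * M = 1 := by
    rw [hstarM, hM, show star W * U * (star U * W) = star W * (U * star U) * W
      from by noncomm_ring, hUs, Matrix.mul_one, hsW]
  have hcol : ∀ j : n, ∑ k, M k j ^ 2 = 1 := by
    intro j
    have := congrArg (fun X => X j j) hMM
    simpa [Matrix.mul_apply, Matrix.one_apply, sq, Matrix.star_apply] using this
  have key : trace (signMatrix hA * B)
      = ∑ j, (∑ k, M k j * s k * M k j) * hB.eigenvalues j := by
    calc trace (signMatrix hA * B)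
        = trace (signMatrix hA * (W * diagonal (RCLike.ofReal ∘ hB.eigenvalues) * star W)) := by
          rw [← (show B = W * diagonal (RCLike.ofReal ∘ hB.eigenvalues) * star W from hB.spectral_theorem)]
      _ = trace (star W * signMatrix hA * W * diagonal (RCLike.ofReal ∘ hB.eigenvalues)) := by
          rw [show signMatrix hA * (W * diagonal (RCLike.ofReal ∘ hB.eigenvalues) * star W)
              = signMatrix hA * (W * diagonal (RCLike.ofReal ∘ hB.eigenvalues)) * star W
            from by noncomm_ring, Matrix.trace_mul_comm,
            show star W * (signMatrix hA * (W * diagonal (RCLike.ofReal ∘ hB.eigenvalues)))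
              = star W * signMatrix hA * W * diagonal (RCLike.ofReal ∘ hB.eigenvalues)
            from by noncomm_ring]
      _ = ∑ j, (star W * signMatrix hA * W) j j * hB.eigenvalues j := by
          simp only [Matrix.trace, Matrix.diag, Matrix.mul_diagonal]
          rfl
      _ = ∑ j, (∑ k, M k j * s k * M k j) * hB.eigenvalues j := by
          refine Finset.sum_congr rfl fun j _ => ?_
          congr 1
          have hconj : star W * signMatrix hA * W = star M * diagonal s * M := by
            rw [hstarM, hM, hP]
            noncomm_ring
          rw [hconj, Matrix.mul_apply]
          refine Finset.sum_congr rfl fun k _ => ?_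
          simp only [Matrix.mul_diagonal, Matrix.star_apply, star_trivial]
  rw [key]
  refine Finset.sum_le_sum fun j _ => ?_
  have hd : |∑ k, M k j * s k * M k j| ≤ 1 :=
    cs_aux _ _ _ (fun k => abs_sgn1_le _) (le_of_eq (hcol j)) (le_of_eq (hcol j))
  calc (∑ k, M k j * s k * M k j) * hB.eigenvalues j
      ≤ |(∑ k, M k j * s k * M k j) * hB.eigenvalues j| := le_abs_self _
    _ = |∑ k, M k j * s k * M k j| * |hB.eigenvalues j| := abs_mul _ _
    _ ≤ 1 * |hB.eigenvalues j| := mul_le_mul_of_nonneg_right hd (abs_nonneg _)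
    _ = |hB.eigenvalues j| := one_mul _

lemma trace_mul_stdBasis (M : Matrix n n ℝ) (u v : n) :
    trace (M * Matrix.single u v (1:ℝ)) = M v u := by
  simp [Matrix.trace, Matrix.diag, Matrix.mul_apply, Matrix.single, Matrix.of_apply,
    Finset.sum_ite_eq, ite_and]

/-- Key abstract lemma. -/
lemma key_lemma (A B : Matrix n n ℝ) (hA : A.IsHermitian) (hB : B.IsHermitian)
    (u v : n)
    (hAB : A = B + (Matrix.single u v 1 + Matrix.single v u 1)) :
    ∑ i, |hA.eigenvalues i| ≤ ∑ i, |hB.eigenvalues i| + 2 := by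
  have h1 := signMatrix_trace_mul hA
  have h2 := trace_signMatrix_mul_le hA hB
  have hmul : signMatrix hA * A = signMatrix hA * B +
      (signMatrix hA * Matrix.single u v 1 + signMatrix hA * Matrix.single v u 1) := by
    rw [← Matrix.mul_add, ← Matrix.mul_add, ← hAB]
  have h3 : trace (signMatrix hA * A)
      = trace (signMatrix hA * B) + (signMatrix hA v u + signMatrix hA u v) := by
    rw [hmul, Matrix.trace_add, Matrix.trace_add, trace_mul_stdBasis, trace_mul_stdBasis]
  have h6 := abs_le.mp (signMatrix_entry_bound hA v u)
  have h7 := abs_le.mp (signMatrix_entry_bound hA u v)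
  linarith

end Aux

/-- The adjacency matrix of a simple graph over `ℝ` is Hermitian. -/
theorem SimpleGraph.adjMatrix_isHermitian {V : Type*} [Fintype V] (G : SimpleGraph V)
    [DecidableRel G.Adj] : (G.adjMatrix ℝ).IsHermitian := by
  rw [Matrix.IsHermitian, Matrix.conjTranspose_eq_transpose_of_trivial]
  exact SimpleGraph.isSymm_adjMatrix G

/-- The eigenvalues of the (real, symmetric) adjacency matrix of a simple graph,
indexed by the vertex set (listed with multiplicity). -/
noncomputable def SimpleGraph.adjEigenvalues {V : Type*} [Fintype V] [DecidableEq V]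
    (G : SimpleGraph V) : V → ℝ :=
  letI := Classical.decRel G.Adj
  (G.adjMatrix_isHermitian).eigenvalues

/-- The energy of a simple graph: the sum of the absolute values of the
eigenvalues of its adjacency matrix. -/
noncomputable def SimpleGraph.energy {V : Type*} [Fintype V] [DecidableEq V]
    (G : SimpleGraph V) : ℝ :=
  ∑ v, |G.adjEigenvalues v|

/-- Deleting an edge decreases the energy by at most 2:
`E(G) ≤ E(G - e) + 2`. -/
theorem energy_le_energy_deleteEdge_add_two {V : Type*} [Fintype V] [DecidableEq V]
    (G : SimpleGraph V) (e : Sym2 V) (he : e ∈ G.edgeSet) :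
    G.energy ≤ (G.deleteEdges {e}).energy + 2 := by
  induction e using Sym2.ind with
  | _ u v =>
  letI : DecidableRel G.Adj := Classical.decRel G.Adj
  letI : DecidableRel (G.deleteEdges {s(u,v)}).Adj := Classical.decRel _
  have hadj : G.Adj u v := (SimpleGraph.mem_edgeSet G).mp he
  have hne : u ≠ v := hadj.ne
  have hmat : G.adjMatrix ℝ = (G.deleteEdges {s(u,v)}).adjMatrix ℝ +
      (Matrix.single u v 1 + Matrix.single v u 1) := by
    ext i j
    simp only [SimpleGraph.adjMatrix_apply, Matrix.add_apply, SimpleGraph.deleteEdges_adj,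
      Set.mem_singleton_iff, Matrix.single, Matrix.of_apply, Sym2.eq_iff]
    by_cases h1 : u = i ∧ v = j
    · obtain ⟨rfl, rfl⟩ := h1
      simp [hadj, hne, hne.symm]
    · by_cases h2 : v = i ∧ u = j
      · obtain ⟨rfl, rfl⟩ := h2
        simp [hadj.symm, hne, hne.symm]
      · have hG' : ¬ (i = u ∧ j = v ∨ i = v ∧ j = u) := by tauto
        by_cases hij : G.Adj i j <;> simp [hij, hG', h1, h2]
  have hG : G.energy = ∑ i, |(G.adjMatrix_isHermitian).eigenvalues i| := rfl
  have hG' : (G.deleteEdges {s(u,v)}).energy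
      = ∑ i, |((G.deleteEdges {s(u,v)}).adjMatrix_isHermitian).eigenvalues i| := rfl
  rw [hG, hG']
  exact key_lemma _ _ G.adjMatrix_isHermitian (G.deleteEdges {s(u,v)}).adjMatrix_isHermitian
    u v hmat
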